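/- Levitt's Gauss–Bonnet formula: let G be a finite abstract simplicial complex with vertex set V (the set of points v such that {v} ∈ G). Define the curvature of a vertex v by K(v) = ∑_{x∈G, v∈x} ω(x)/|x| (a rational number). Then ∑_{v∈V} K(v) = χ(G). -/

import Mathlib

open Finset BigOperators

variable {α : Type*} [DecidableEq α] [Fintype α]

/-- A finite abstract simplicial complex: a finite collection of nonempty finite
sets closed under taking nonempty subsets. -/
def IsComplex (G : Finset (Finset α)) : Prop :=
  (∀ x ∈ G, x.Nonempty) ∧ ∀ x ∈ G, ∀ y : Finset α, y.Nonempty → y ⊆ x → y ∈ G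

/-- ω(x) = (-1)^(|x|-1). -/
def omegaS (x : Finset α) : ℤ := (-1) ^ (x.card - 1)

/-- Euler characteristic χ(G) = ∑_{x∈G} ω(x). -/
def chi (G : Finset (Finset α)) : ℤ := ∑ x ∈ G, omegaS x

/-- Levitt curvature of a vertex: K(v) = ∑_{x∈G, v∈x} ω(x)/|x|. -/
def levittCurv (G : Finset (Finset α)) (v : α) : ℚ :=
  ∑ x ∈ G.filter (fun x => v ∈ x), (omegaS x : ℚ) / (x.card : ℚ)

/-- Levitt's Gauss–Bonnet formula: the curvatures of the vertices
(the points v with {v} ∈ G) add up to the Euler characteristic. -/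
theorem levitt_gauss_bonnet (G : Finset (Finset α)) (hG : IsComplex G) :
    ∑ v ∈ Finset.univ.filter (fun v : α => {v} ∈ G), levittCurv G v
      = (chi G : ℚ) := by
  unfold levittCurv chi
  push_cast
  rw [Finset.sum_comm' (s := Finset.univ.filter (fun v : α => {v} ∈ G))
    (t := fun v => G.filter (fun x => v ∈ x))
    (t' := G) (s' := fun x => Finset.univ.filter (fun v => v ∈ x))]
  · refine Finset.sum_congr rfl fun x hx => ?_
    rw [Finset.sum_const]
    have h0 : (x.card : ℚ) ≠ 0 := Nat.cast_ne_zero.mpr (hG.1 x hx).card_pos.ne'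
    have hcard : (Finset.univ.filter (fun v => v ∈ x)).card = x.card := by
      congr 1; ext v; simp
    rw [hcard]
    rw [nsmul_eq_mul]
    field_simp
  · intro v x
    simp only [Finset.mem_filter, Finset.mem_univ, true_and]
    constructor
    · tauto
    · rintro ⟨hvx, hx⟩
      exact ⟨hG.2 x hx {v} ⟨v, Finset.mem_singleton_self v⟩
        (Finset.singleton_subset_iff.mpr hvx), hx, hvx⟩
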